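/- Let r ≥ 2 be a real number, a ≥ 0, and define the Fenchel conjugate φ_a*(u) = sup_{t ≥ 0} ( u·t − φ_a(t) ) for u ≥ 0, where φ_a(t) = ∫_0^t (a+s)^{r−2} s ds. Then for all u ≥ 0: φ_a*(2u) ≤ 4 φ_a*(u). In particular the Δ₂ constant of φ_a* is bounded by 4 uniformly in a. -/
import Mathlib


open MeasureTheory

/-- The shifted function `φ_a(t) = ∫_0^t (a+s)^{r−2} s ds`. -/
noncomputable def phi (r a t : ℝ) : ℝ := ∫ s in (0 : ℝ)..t, (a + s) ^ (r - 2) * s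

lemma phi_cont (r a : ℝ) (hr : 2 ≤ r) : Continuous fun s : ℝ => (a + s) ^ (r - 2) * s := by
  apply Continuous.mul _ continuous_id
  rw [continuous_iff_continuousAt]
  intro x
  exact (Real.continuousAt_rpow_const _ _ (Or.inr (by linarith))).comp (by fun_prop)

lemma phi_nonneg (r a : ℝ) (hr : 2 ≤ r) (ha : 0 ≤ a) {t : ℝ} (ht : 0 ≤ t) :
    0 ≤ phi r a t := by
  apply intervalIntegral.integral_nonneg ht
  intro s hs
  exact mul_nonneg (Real.rpow_nonneg (by linarith [hs.1]) _) hs.1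

lemma phi_double (r a : ℝ) (hr : 2 ≤ r) (ha : 0 ≤ a) {t : ℝ} (ht : 0 ≤ t) :
    4 * phi r a (t / 2) ≤ phi r a t := by
  have hcont : ∀ c : ℝ, Continuous fun σ : ℝ => (a + c * σ) ^ (r - 2) * σ := by
    intro c
    apply Continuous.mul _ continuous_id
    rw [continuous_iff_continuousAt]
    intro x
    exact (Real.continuousAt_rpow_const _ _ (Or.inr (by linarith))).comp (by fun_prop)
  have hsub : (2:ℝ) • ∫ σ in (0:ℝ)..(t/2), (a + 2 * σ) ^ (r - 2) * (2 * σ) =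
      ∫ s in ((2:ℝ)*0)..(2*(t/2)), (a + s) ^ (r - 2) * s :=
    intervalIntegral.smul_integral_comp_mul_left (fun s => (a + s) ^ (r - 2) * s) 2
  have hhalf : (∫ σ in (0:ℝ)..(t/2), (a + 2 * σ) ^ (r - 2) * (2 * σ)) =
      2 * ∫ σ in (0:ℝ)..(t/2), (a + 2 * σ) ^ (r - 2) * σ := by
    rw [← intervalIntegral.integral_const_mul]
    exact intervalIntegral.integral_congr (fun x _ => by ring)
  have hphi : phi r a t = 4 * ∫ σ in (0:ℝ)..(t/2), (a + 2 * σ) ^ (r - 2) * σ := by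
    rw [show (2:ℝ)*0 = 0 by ring, show (2:ℝ)*(t/2) = t by ring] at hsub
    rw [phi, ← hsub, smul_eq_mul, hhalf]; ring
  rw [hphi]
  have h2 : (0:ℝ) ≤ t / 2 := by linarith
  have hmono : (∫ σ in (0:ℝ)..(t/2), (a + σ) ^ (r - 2) * σ) ≤
      ∫ σ in (0:ℝ)..(t/2), (a + 2 * σ) ^ (r - 2) * σ := by
    apply intervalIntegral.integral_mono_on h2
    · simpa using (hcont 1).intervalIntegrable 0 (t/2)
    · exact (hcont 2).intervalIntegrable 0 (t/2)
    · intro s hs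
      have hs0 : 0 ≤ s := hs.1
      have : (a + s) ^ (r - 2) ≤ (a + 2 * s) ^ (r - 2) :=
        Real.rpow_le_rpow (by linarith) (by linarith) (by linarith)
      exact mul_le_mul_of_nonneg_right this hs0
  have : phi r a (t/2) ≤ ∫ σ in (0:ℝ)..(t/2), (a + 2 * σ) ^ (r - 2) * σ := by
    rw [phi]; simpa using hmono
  linarith

lemma phi_lb (r a : ℝ) (hr : 2 ≤ r) (ha : 0 ≤ a) {t : ℝ} (ht : 0 ≤ t) :
    t ^ r / r ≤ phi r a t := by
  have hcont : Continuous fun s : ℝ => s ^ (r - 1) := by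
    rw [continuous_iff_continuousAt]
    intro x
    exact Real.continuousAt_rpow_const _ _ (Or.inr (by linarith))
  have hmono : (∫ s in (0:ℝ)..t, s ^ (r - 1)) ≤ phi r a t := by
    rw [phi]
    apply intervalIntegral.integral_mono_on ht
    · exact hcont.intervalIntegrable 0 t
    · exact (phi_cont r a hr).intervalIntegrable 0 t
    · intro s hs
      have hs0 : 0 ≤ s := hs.1
      rcases eq_or_lt_of_le hs0 with h | h
      · simp [← h, Real.zero_rpow (show r - 1 ≠ 0 by intro hc; linarith)]
      · calc s ^ (r - 1) = s ^ (r - 2) * s := by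
              rw [show r - 1 = (r - 2) + 1 by ring, Real.rpow_add h, Real.rpow_one]
          _ ≤ (a + s) ^ (r - 2) * s :=
              mul_le_mul_of_nonneg_right
                (Real.rpow_le_rpow hs0 (by linarith) (by linarith)) hs0
  have hint : (∫ s in (0:ℝ)..t, s ^ (r - 1)) = t ^ r / r := by
    rw [integral_rpow (Or.inl (by linarith))]
    rw [show r - 1 + 1 = r by ring, Real.zero_rpow (show r ≠ 0 by linarith)]
    ring
  linarith [hint ▸ hmono]

lemma phi_mem_bdd (r a : ℝ) (hr : 2 ≤ r) (ha : 0 ≤ a) (u : ℝ) (hu : 0 ≤ u) :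
    ∀ y ∈ {y : ℝ | ∃ t : ℝ, 0 ≤ t ∧ y = u * t - phi r a t}, y ≤ u * max 1 (r * u) := by
  rintro y ⟨t, ht, rfl⟩
  set T := max 1 (r * u) with hT
  have hT0 : 0 ≤ T := le_trans zero_le_one (le_max_left _ _)
  rcases le_total t T with h | h
  · have := phi_nonneg r a hr ha ht
    nlinarith
  · have ht1 : (1:ℝ) ≤ t := le_trans (le_max_left _ _) h
    have htru : r * u ≤ t := le_trans (le_max_right _ _) h
    have h1 : r * u * t ≤ t ^ r := by
      calc r * u * t ≤ t ^ (r - 1) * t := by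
            have : t ^ (1:ℝ) ≤ t ^ (r - 1) :=
              Real.rpow_le_rpow_of_exponent_le ht1 (by linarith)
            rw [Real.rpow_one] at this
            nlinarith
        _ = t ^ r := by
            rw [← Real.rpow_add_one (by positivity : t ≠ 0)]
            norm_num
    have h2 : u * t ≤ t ^ r / r := by
      rw [le_div_iff₀ (by linarith : (0:ℝ) < r)]; nlinarith
    have := phi_lb r a hr ha ht
    nlinarith [mul_nonneg hu hT0]

/-- The Fenchel conjugate `φ_a*(u) = sup_{t ≥ 0} (u t − φ_a(t))`. -/
noncomputable def phiStar (r a u : ℝ) : ℝ :=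
  sSup {y : ℝ | ∃ t : ℝ, 0 ≤ t ∧ y = u * t - phi r a t}

/-- Doubling (Δ₂) bound for the Fenchel conjugates of the shifted functions,
uniform in the shift `a`: for `r ≥ 2`, `φ_a*(2u) ≤ 4 φ_a*(u)` for all
`a ≥ 0` and `u ≥ 0`. -/
theorem phiStar_doubling
    (r : ℝ) (hr : 2 ≤ r) (a : ℝ) (ha : 0 ≤ a) :
    ∀ u : ℝ, 0 ≤ u → phiStar r a (2 * u) ≤ 4 * phiStar r a u := by
  intro u hu
  set S : Set ℝ := {y : ℝ | ∃ t : ℝ, 0 ≤ t ∧ y = u * t - phi r a t} with hS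
  have hbdd : BddAbove S := ⟨u * max 1 (r * u), phi_mem_bdd r a hr ha u hu⟩
  have h0 : (0:ℝ) ∈ S := ⟨0, le_refl 0, by simp [phi]⟩
  have hsup0 : 0 ≤ sSup S := le_csSup hbdd h0
  rw [phiStar]
  apply Real.sSup_le _ (by positivity)
  rintro y ⟨t, ht, rfl⟩
  have hmem : u * (t / 2) - phi r a (t / 2) ∈ S := ⟨t / 2, by linarith, rfl⟩
  have hle : u * (t / 2) - phi r a (t / 2) ≤ sSup S := le_csSup hbdd hmem
  have hdbl := phi_double r a hr ha ht
  have : 2 * u * t - phi r a t ≤ 4 * (u * (t / 2) - phi r a (t / 2)) := by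
    have h4 : 4 * (u * (t / 2)) = 2 * u * t := by ring
    linarith
  calc 2 * u * t - phi r a t ≤ 4 * (u * (t / 2) - phi r a (t / 2)) := this
    _ ≤ 4 * sSup S := by linarith
    _ = 4 * phiStar r a u := rfl
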